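/- Let V = K², let L ⊆ V be a free O'-submodule of rank 2 with K·L = V, and let g ∈ GL(2, K) satisfy g·L = a·L for some a ∈ K*. Then ν'(det g) ∈ 2·(ℤ × ℤ), i.e. both components of ν'(det g) are even. (In other words, the stabilizer of any vertex class of the higher Bruhat–Tits tree is contained in the subgroup PGL⁺(V) = ker(ν'(det(·)) mod 2Γ_K).) -/

import Mathlib

set_option synthInstance.maxHeartbeats 1000000
set_option maxHeartbeats 1000000

noncomputable section

open HahnSeries

namespace TwoDimLocal

variable (k : Type) [Field k]

/-- `k((u))`, the field of Laurent series over `k`. -/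
abbrev K1 := LaurentSeries k

/-- `K = k((u))((t))`, the two-dimensional local field of iterated Laurent series. -/
abbrev K := LaurentSeries (LaurentSeries k)

section Nonneg

variable (F : Type) [Field F]

lemma order_nonneg_of_support {x : LaurentSeries F} (hx : x ≠ 0)
    (h : ∀ n : ℤ, n < 0 → x.coeff n = 0) : 0 ≤ x.order := by
  by_contra hlt
  push_neg at hlt
  exact hx (coeff_order_eq_zero.1 (h x.order hlt))

/-- The subring `F[[X]] ⊆ F((X))` of power series, described by vanishing of the
coefficients of negative index. -/
def nonneg : Subring (LaurentSeries F) where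
  carrier := {x | ∀ n : ℤ, n < 0 → x.coeff n = 0}
  zero_mem' := by intro n _; simp
  one_mem' := by
    intro n hn
    rw [HahnSeries.coeff_one, if_neg (by omega)]
  add_mem' := by
    intro a b ha hb n hn
    rw [HahnSeries.coeff_add, ha n hn, hb n hn, add_zero]
  neg_mem' := by
    intro a ha n hn
    rw [HahnSeries.coeff_neg, ha n hn, neg_zero]
  mul_mem' := by
    intro a b ha hb n hn
    by_contra hne
    obtain ⟨i, hi, j, hj, rfl⟩ := support_mul_subset ((mem_support _ _).2 hne)
    rw [mem_support] at hi hj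
    have hi0 : 0 ≤ i := by by_contra h; push_neg at h; exact hi (ha i h)
    have hj0 : 0 ≤ j := by by_contra h; push_neg at h; exact hj (hb j h)
    exact absurd hn (not_lt.2 (add_nonneg hi0 hj0))

lemma mem_nonneg_iff {x : LaurentSeries F} :
    x ∈ nonneg F ↔ ∀ n : ℤ, n < 0 → x.coeff n = 0 := Iff.rfl

lemma coeff_zero_mul {x y : LaurentSeries F} (hx : x ∈ nonneg F) (hy : y ∈ nonneg F) :
    (x * y).coeff 0 = x.coeff 0 * y.coeff 0 := by
  rcases eq_or_ne x 0 with rfl | hx0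
  · simp
  rcases eq_or_ne y 0 with rfl | hy0
  · simp
  have hxo : 0 ≤ x.order := order_nonneg_of_support F hx0 hx
  have hyo : 0 ≤ y.order := order_nonneg_of_support F hy0 hy
  rcases lt_or_eq_of_le hxo with hxo' | hxo'
  · have h1 : x.coeff 0 = 0 := HahnSeries.coeff_eq_zero_of_lt_order hxo'
    have h2 : (x * y).coeff 0 = 0 := by
      apply HahnSeries.coeff_eq_zero_of_lt_order
      rw [HahnSeries.order_mul hx0 hy0]
      omega
    rw [h1, h2, zero_mul]
  rcases lt_or_eq_of_le hyo with hyo' | hyo'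
  · have h1 : y.coeff 0 = 0 := HahnSeries.coeff_eq_zero_of_lt_order hyo'
    have h2 : (x * y).coeff 0 = 0 := by
      apply HahnSeries.coeff_eq_zero_of_lt_order
      rw [HahnSeries.order_mul hx0 hy0]
      omega
    rw [h1, h2, mul_zero]
  have := HahnSeries.coeff_mul_order_add_order x y
  rw [HahnSeries.leadingCoeff_eq, HahnSeries.leadingCoeff_eq, ← hxo', ← hyo'] at this
  simpa using this

end Nonneg

/-- The ring of integers `O_K = k((u))[[t]]` of `K` with respect to the `t`-adic valuation. -/
def OK : Subring (K k) := nonneg (K1 k)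

/-- The rank-2 valuation subring `O' = p⁻¹(k[[u]]) ⊆ K`, consisting of those `t`-adic
integers whose constant `t`-coefficient is a power series in `u`. -/
def Oprime : Subring (K k) where
  carrier := {x | x ∈ OK k ∧ x.coeff 0 ∈ nonneg k}
  zero_mem' := ⟨Subring.zero_mem _, by simp⟩
  one_mem' := ⟨Subring.one_mem _, by
    intro n hn
    rw [show ((1 : K k).coeff 0) = 1 from by rw [HahnSeries.coeff_one]; simp]
    rw [HahnSeries.coeff_one, if_neg (by omega)]⟩
  add_mem' := by
    rintro a b ⟨ha1, ha2⟩ ⟨hb1, hb2⟩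
    refine ⟨Subring.add_mem _ ha1 hb1, ?_⟩
    rw [HahnSeries.coeff_add]
    exact Subring.add_mem _ ha2 hb2
  neg_mem' := by
    rintro a ⟨ha1, ha2⟩
    refine ⟨Subring.neg_mem _ ha1, ?_⟩
    rw [HahnSeries.coeff_neg]
    exact Subring.neg_mem _ ha2
  mul_mem' := by
    rintro a b ⟨ha1, ha2⟩ ⟨hb1, hb2⟩
    refine ⟨Subring.mul_mem _ ha1 hb1, ?_⟩
    rw [coeff_zero_mul (K1 k) ha1 hb1]
    exact Subring.mul_mem _ ha2 hb2

lemma Oprime_le_OK : (Oprime k : Set (K k)) ⊆ (OK k : Set (K k)) := fun _ h => h.1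

/-- The local parameter `t` of `K = k((u))((t))`. -/
def t : K k := HahnSeries.single (1 : ℤ) 1

/-- The local parameter `u` of `K = k((u))((t))`, i.e. the image in `K` of the
local parameter of `k((u))`. -/
def u : K k := HahnSeries.C (HahnSeries.single (1 : ℤ) (1 : k))

/-- The maximal ideal `m = p⁻¹(u·k[[u]])` of `O'`, as a subset of `K`. -/
def mSet : Set (K k) := {x | x ∈ Oprime k ∧ (x.coeff 0).coeff 0 = 0}

/-- The rank-two valuation `ν' : K* → ℤ ×ₗ ℤ`: the first component is the `t`-adic order,
the second one the `u`-adic order of the leading `t`-coefficient. (Junk value at `0`.) -/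
def nu (x : K k) : ℤ ×ₗ ℤ := toLex (x.order, (x.coeff x.order).order)

end TwoDimLocal

namespace TwoDimLocal

open Matrix

section FieldHelpers

variable (F : Type) [Field F]

lemma field_mulVec_smul (g : Matrix (Fin 2) (Fin 2) F) (a : F) (x : Fin 2 → F) :
    g.mulVec (a • x) = a • g.mulVec x :=
  Matrix.mulVec_smul g a x

lemma field_smul_comm (a b : F) (x : Fin 2 → F) : a • b • x = b • a • x :=
  smul_comm a b x

end FieldHelpers

variable (k : Type) [Field k]

/-- The `O'`-linear endomorphism of `K²` given by a matrix. -/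
def gLin (g : Matrix (Fin 2) (Fin 2) (K k)) :
    (Fin 2 → K k) →ₗ[Oprime k] (Fin 2 → K k) where
  toFun x := g.mulVec x
  map_add' x y := Matrix.mulVec_add g x y
  map_smul' c x := by
    show g.mulVec ((c : K k) • x) = (c : K k) • g.mulVec x
    exact field_mulVec_smul (K k) g (c : K k) x

/-- Scaling by `a ∈ K` as an `O'`-linear endomorphism of `K²`. -/
def smulLin (a : K k) : (Fin 2 → K k) →ₗ[Oprime k] (Fin 2 → K k) where
  toFun x := a • x
  map_add' x y := smul_add a x y
  map_smul' c x := by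
    show a • (c : K k) • x = (c : K k) • a • x
    exact field_smul_comm (K k) a (c : K k) x

/-- The scaling `a·N` of an `O'`-submodule `N ⊆ K²` by `a ∈ K`. -/
def scaleL (a : K k) (N : Submodule (Oprime k) (Fin 2 → K k)) :
    Submodule (Oprime k) (Fin 2 → K k) :=
  Submodule.map (smulLin k a) N

end TwoDimLocal

namespace TwoDimLocal

open Matrix

variable (k : Type) [Field k]

/-- Lattices in `V = K²`: free rank-2 `O'`-submodules spanning `V` over `K`, i.e. the
submodules of the form `O'·e₁ ⊕ O'·e₂` for a `K`-basis `(e₁, e₂)`. -/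
def IsLattice2 (L : Submodule (Oprime k) (Fin 2 → K k)) : Prop :=
  ∃ b : Module.Basis (Fin 2) (K k) (Fin 2 → K k), ∀ x : Fin 2 → K k,
    x ∈ L ↔ ∃ c d : K k, c ∈ Oprime k ∧ d ∈ Oprime k ∧ x = c • b 0 + d • b 1

section Aux

variable {k}

lemma hahn_zero_ne_one (F : Type) [Field F] : (0 : LaurentSeries F) ≠ 1 :=
  @zero_ne_one _ _ _ (@NeZero.one _ _ inferInstance)

lemma aux_coeff_order_mul {x y : K k} (hx : x ≠ 0) (hy : y ≠ 0) :
    (x * y).coeff ((x * y).order) = x.coeff x.order * y.coeff y.order := by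
  rw [HahnSeries.order_mul hx hy, HahnSeries.coeff_mul_order_add_order,
    HahnSeries.leadingCoeff_eq, HahnSeries.leadingCoeff_eq]

lemma aux_ord2_mul {x y : K k} (hx : x ≠ 0) (hy : y ≠ 0) :
    ((x * y).coeff ((x * y).order)).order
      = (x.coeff x.order).order + (y.coeff y.order).order := by
  rw [aux_coeff_order_mul hx hy]
  exact HahnSeries.order_mul (fun h => hx (coeff_order_eq_zero.1 h)) (fun h => hy (coeff_order_eq_zero.1 h))

lemma aux_unit_ord {v w : K k} (hv : v ∈ Oprime k) (hw : w ∈ Oprime k)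
    (hvw : v * w = 1) : v.order = 0 ∧ (v.coeff 0).order = 0 := by
  have hv0 : v ≠ 0 := by
    intro h0; rw [h0] at hvw
    exact hahn_zero_ne_one _ ((zero_mul w).symm.trans hvw)
  have hw0 : w ≠ 0 := by
    intro h0; rw [h0] at hvw
    exact hahn_zero_ne_one _ ((mul_zero v).symm.trans hvw)
  have hsum : v.order + w.order = 0 := by
    rw [← HahnSeries.order_mul hv0 hw0, hvw, HahnSeries.order_one]
  have hvo : 0 ≤ v.order := order_nonneg_of_support (K1 k) hv0 hv.1
  have hwo : 0 ≤ w.order := order_nonneg_of_support (K1 k) hw0 hw.1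
  have hvord : v.order = 0 := by omega
  refine ⟨hvord, ?_⟩
  have hcm : v.coeff 0 * w.coeff 0 = 1 := by
    rw [← coeff_zero_mul (K1 k) hv.1 hw.1, hvw]
    simp
  have hc0 : v.coeff 0 ≠ 0 := by
    intro h0; rw [h0] at hcm
    exact hahn_zero_ne_one _ ((zero_mul _).symm.trans hcm)
  have hd0 : w.coeff 0 ≠ 0 := by
    intro h0; rw [h0] at hcm
    exact hahn_zero_ne_one _ ((mul_zero _).symm.trans hcm)
  have hsum2 : (v.coeff 0).order + (w.coeff 0).order = 0 := by
    rw [← HahnSeries.order_mul hc0 hd0, hcm, HahnSeries.order_one]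
  have h1 : 0 ≤ (v.coeff 0).order := order_nonneg_of_support k hc0 hv.2
  have h2 : 0 ≤ (w.coeff 0).order := order_nonneg_of_support k hd0 hw.2
  omega

lemma mul_cancel_right_aux {F : Type} [Field F] {x y c : F} (hc : c ≠ 0)
    (h : x * c = y * c) : x = y := mul_right_cancel₀ hc h

lemma mul_cancel_left_aux {F : Type} [Field F] {x y c : F} (hc : c ≠ 0)
    (h : c * x = c * y) : x = y := mul_left_cancel₀ hc h

set_option maxHeartbeats 4000000 in
lemma eMat_det_ne_zero {k : Type} [Field k] (b : Module.Basis (Fin 2) (K k) (Fin 2 → K k)) :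
    (Matrix.of fun i j => b j i : Matrix (Fin 2) (Fin 2) (K k)).det ≠ 0 := by
  have hflip := Module.Basis.toMatrix_mul_toMatrix_flip (R := K k) (M := Fin 2 → K k)
    (Pi.basisFun (K k) (Fin 2)) b
  have hmat : (Pi.basisFun (K k) (Fin 2)).toMatrix b
      = (Matrix.of fun i j => b j i : Matrix (Fin 2) (Fin 2) (K k)) := by
    ext i j
    simp [Module.Basis.toMatrix_apply]
  rw [hmat] at hflip
  have hd := congrArg Matrix.det hflip
  rw [Matrix.det_mul, Matrix.det_one] at hd
  exact left_ne_zero_of_mul_eq_one (M₀ := K k) hd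

end Aux

/-- If `g ∈ GL(2, K)` stabilizes the class of a lattice `L ⊆ K²`
(i.e. `g·L = a·L` for some `a ∈ K*`), then both components of `ν'(det g)` are even;
that is, the stabilizer of a vertex is contained in `PGL⁺ = ker(ν'(det(·)) mod 2Γ)`. -/
theorem stabilizer_det_valuation_even (L : Submodule (Oprime k) (Fin 2 → K k))
    (hL : IsLattice2 k L) (g : GL (Fin 2) (K k)) (a : K k) (ha : a ≠ 0)
    (hstab : Submodule.map (gLin k (g : Matrix (Fin 2) (Fin 2) (K k))) L = scaleL k a L) :
    ∃ p : ℤ × ℤ, nu k (Matrix.det (g : Matrix (Fin 2) (Fin 2) (K k)))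
      = toLex (2 * p.1, 2 * p.2) := by
  classical
  obtain ⟨b, hb⟩ := hL
  set G : Matrix (Fin 2) (Fin 2) (K k) := (g : Matrix (Fin 2) (Fin 2) (K k)) with hG
  have hbL : ∀ j : Fin 2, b j ∈ L := by
    intro j
    fin_cases j
    · exact (hb _).2 ⟨1, 0, Subring.one_mem _, Subring.zero_mem _, by
        show b 0 = 1 • b 0 + 0 • b 1
        have h1 : (1 : K k) • b 0 = b 0 := funext fun i => one_mul (b 0 i)
        have h2 : (0 : K k) • b 1 = 0 := funext fun i => zero_mul (b 1 i)
        rw [h1, h2, add_zero]⟩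
    · exact (hb _).2 ⟨0, 1, Subring.zero_mem _, Subring.one_mem _, by
        show b 1 = 0 • b 0 + 1 • b 1
        have h1 : (1 : K k) • b 1 = b 1 := funext fun i => one_mul (b 1 i)
        have h2 : (0 : K k) • b 0 = 0 := funext fun i => zero_mul (b 0 i)
        rw [h1, h2, zero_add]⟩
  -- forward: g (b j) ∈ a • L
  have hfwd : ∀ j : Fin 2, ∃ c d : K k, c ∈ Oprime k ∧ d ∈ Oprime k ∧
      G.mulVec (b j) = a • (c • b 0 + d • b 1) := by
    intro j
    have hmem : gLin k G (b j) ∈ Submodule.map (gLin k G) L :=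
      Submodule.mem_map_of_mem (hbL j)
    rw [hstab] at hmem
    obtain ⟨y, hyL, hy⟩ := hmem
    obtain ⟨c, d, hc, hd, hcd⟩ := (hb y).1 hyL
    have hy2 : a • y = G.mulVec (b j) := hy
    exact ⟨c, d, hc, hd, by rw [← hy2, hcd]⟩
  -- backward: a • b j ∈ g • L
  have hbwd : ∀ j : Fin 2, ∃ c d : K k, c ∈ Oprime k ∧ d ∈ Oprime k ∧
      G.mulVec (c • b 0 + d • b 1) = a • b j := by
    intro j
    have hmem : smulLin k a (b j) ∈ scaleL k a L :=
      Submodule.mem_map_of_mem (hbL j)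
    rw [← hstab] at hmem
    obtain ⟨x, hxL, hx⟩ := hmem
    obtain ⟨c, d, hc, hd, hcd⟩ := (hb x).1 hxL
    have hx2 : G.mulVec x = a • b j := hx
    exact ⟨c, d, hc, hd, by rw [← hcd]; exact hx2⟩
  choose c d hc hd heq using hfwd
  choose c' d' hc' hd' heq' using hbwd
  set eMat : Matrix (Fin 2) (Fin 2) (K k) := Matrix.of fun i j => b j i with heM
  set h : Matrix (Fin 2) (Fin 2) (K k) := Matrix.of fun i j => ![c j, d j] i with hh
  set h' : Matrix (Fin 2) (Fin 2) (K k) := Matrix.of fun i j => ![c' j, d' j] i with hh'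
  have hA : G * eMat = a • (eMat * h) := by
    ext i j
    have := congrFun (heq j) i
    simp only [Matrix.mulVec, dotProduct, Pi.smul_apply, Pi.add_apply, smul_eq_mul,
      Fin.sum_univ_two] at this
    simp only [Matrix.mul_apply, Matrix.smul_apply, Matrix.of_apply, Fin.sum_univ_two,
      heM, hh, Matrix.cons_val_zero, Matrix.cons_val_one, Matrix.head_cons, smul_eq_mul]
    rw [this]; ring
  have hB : a • eMat = (G * eMat) * h' := by
    ext i j
    have := congrFun (heq' j) i
    simp only [Matrix.mulVec, dotProduct, Pi.smul_apply, Pi.add_apply, smul_eq_mul,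
      Fin.sum_univ_two] at this
    simp only [Matrix.mul_apply, Matrix.smul_apply, Matrix.of_apply, Fin.sum_univ_two,
      heM, hh', Matrix.cons_val_zero, Matrix.cons_val_one, Matrix.head_cons, smul_eq_mul]
    rw [← this]; ring
  have hedet : eMat.det ≠ 0 := eMat_det_ne_zero b
  have haa : a * a ≠ 0 := mul_ne_zero ha ha
  have dA := congrArg Matrix.det hA
  rw [Matrix.det_mul, Matrix.det_smul, Matrix.det_mul] at dA
  have dB := congrArg Matrix.det hB
  rw [Matrix.det_smul, Matrix.det_mul, Matrix.det_mul] at dB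
  simp only [Fintype.card_fin] at dA dB
  have hdetG : G.det = a * a * h.det := by
    refine mul_cancel_right_aux hedet ?_
    rw [dA]; ring
  have hdet1 : h.det * h'.det = 1 := by
    refine mul_cancel_left_aux (mul_ne_zero haa hedet) ?_
    rw [hdetG] at dB
    calc (a * a * eMat.det) * (h.det * h'.det)
        = a * a * h.det * eMat.det * h'.det := by ring
      _ = a ^ 2 * eMat.det := dB.symm
      _ = (a * a * eMat.det) * 1 := by ring
  have hhmem : h.det ∈ Oprime k := by
    rw [Matrix.det_fin_two]
    have e00 : h 0 0 = c 0 := rfl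
    have e01 : h 0 1 = c 1 := rfl
    have e10 : h 1 0 = d 0 := rfl
    have e11 : h 1 1 = d 1 := rfl
    rw [e00, e01, e10, e11]
    exact Subring.sub_mem _ (Subring.mul_mem _ (hc 0) (hd 1))
      (Subring.mul_mem _ (hc 1) (hd 0))
  have hh'mem : h'.det ∈ Oprime k := by
    rw [Matrix.det_fin_two]
    have e00 : h' 0 0 = c' 0 := rfl
    have e01 : h' 0 1 = c' 1 := rfl
    have e10 : h' 1 0 = d' 0 := rfl
    have e11 : h' 1 1 = d' 1 := rfl
    rw [e00, e01, e10, e11]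
    exact Subring.sub_mem _ (Subring.mul_mem _ (hc' 0) (hd' 1))
      (Subring.mul_mem _ (hc' 1) (hd' 0))
  obtain ⟨hu1, hu2⟩ := aux_unit_ord hhmem hh'mem hdet1
  have hv0 : h.det ≠ 0 := by
    intro h0; rw [h0] at hdet1
    exact hahn_zero_ne_one _ ((zero_mul _).symm.trans hdet1)
  refine ⟨(a.order, (a.coeff a.order).order), ?_⟩
  unfold nu
  rw [hdetG]
  have o1 : (a * a * h.det).order = 2 * a.order := by
    rw [HahnSeries.order_mul haa hv0, HahnSeries.order_mul ha ha, hu1]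
    ring
  have o2 : ((a * a * h.det).coeff ((a * a * h.det).order)).order
      = 2 * (a.coeff a.order).order := by
    rw [aux_ord2_mul haa hv0, aux_ord2_mul ha ha, hu1, hu2]
    ring
  rw [o2, o1]

end TwoDimLocal
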